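/- Let a_k(t) ≥ 0 be measurable essentially bounded functions and h_k(t) ≤ t measurable delays with t - h_k(t) ≤ n₀ for all k and t. Suppose the fundamental function satisfies |X(t,s)| ≤ K e^{-λ(t-s)} for some K, λ > 0 and all t ≥ s ≥ 0. Then there exists R > 0 such that liminf_{t→∞} ∫_t^{t+R} Σ_{k=1}^m a_k(τ) dτ > 0. -/

import Mathlib

open MeasureTheory Real Finset Filter

/-- Theorem 5 (second part): nonnegative bounded coefficients, delays bounded by
n₀, and an exponential estimate |X(t,s)| ≤ K e^{-λ(t-s)} for the fundamental
function imply liminf_{t→∞} ∫_t^{t+R} Σ_k a_k > 0 for some R > 0. -/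
theorem stmt8 (m : ℕ) (a : Fin m → ℝ → ℝ) (h : Fin m → ℝ → ℝ) (X : ℝ → ℝ → ℝ)
    (hameas : ∀ k, Measurable (a k)) (habd : ∃ A : ℝ, ∀ k t, |a k t| ≤ A)
    (hapos : ∀ k t, 0 ≤ a k t)
    (hh : ∀ k, Measurable (h k)) (hht : ∀ k t, h k t ≤ t)
    (n₀ : ℝ) (hdel : ∀ k t, t - h k t ≤ n₀)
    (hX0 : ∀ s t : ℝ, 0 ≤ s → t < s → X t s = 0)
    (hX1 : ∀ s : ℝ, 0 ≤ s → X s s = 1)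
    (hXeq : ∀ s t : ℝ, 0 ≤ s → s ≤ t →
      X t s = 1 - ∫ τ in s..t, ∑ k : Fin m, a k τ * X (h k τ) s)
    (K l : ℝ) (hK : 0 < K) (hl : 0 < l)
    (hexp : ∀ s t : ℝ, 0 ≤ s → s ≤ t → |X t s| ≤ K * Real.exp (-l * (t - s))) :
    ∃ R > (0:ℝ),
      0 < Filter.liminf (fun t => ∫ τ in t..(t + R), ∑ k : Fin m, a k τ)
        Filter.atTop := by
  obtain ⟨A, hA⟩ := habd
  set S : ℝ → ℝ := fun τ => ∑ k : Fin m, a k τ with hSdef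
  have hSmeas : Measurable S := Finset.measurable_sum _ (fun k _ => hameas k)
  have hSnn : ∀ τ, 0 ≤ S τ := fun τ => Finset.sum_nonneg fun k _ => hapos k τ
  have hSbd : ∀ τ, |S τ| ≤ m * A := by
    intro τ
    rw [abs_of_nonneg (hSnn τ)]
    calc S τ ≤ ∑ _k : Fin m, A :=
          Finset.sum_le_sum fun k _ => (abs_le.1 (hA k τ)).2
      _ = m * A := by simp [mul_comm]
  set R : ℝ := max 1 (Real.log (2 * K) / l) with hRdef
  have hR0 : (0:ℝ) < R := lt_of_lt_of_le one_pos (le_max_left _ _)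
  have hRexp : K * Real.exp (-l * R) ≤ 1 / 2 := by
    have h2K : (0:ℝ) < 2 * K := by linarith
    have h1 : Real.log (2 * K) / l ≤ R := le_max_right _ _
    have hlR : Real.log (2 * K) ≤ l * R := by
      rw [div_le_iff₀ hl] at h1; linarith
    have h2 : Real.exp (-l * R) ≤ (2 * K)⁻¹ := by
      rw [← Real.exp_log h2K, ← Real.exp_neg, Real.exp_le_exp]
      linarith
    calc K * Real.exp (-l * R) ≤ K * (2 * K)⁻¹ :=
          mul_le_mul_of_nonneg_left h2 hK.le
      _ = 1 / 2 := by field_simp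
  set c : ℝ := 1 / (2 * K) with hcdef
  have hcpos : 0 < c := by positivity
  have hIntS : ∀ t : ℝ, IntervalIntegrable S volume t (t + R) := by
    intro t
    rw [intervalIntegrable_iff]
    refine Integrable.mono' (g := fun _ => (m : ℝ) * A)
      (integrableOn_const (hs := measure_Ioc_lt_top.ne))
      hSmeas.aestronglyMeasurable ?_
    exact Eventually.of_forall fun τ => by simpa using hSbd τ
  have key : ∀ t : ℝ, 0 ≤ t → c ≤ ∫ τ in t..(t + R), S τ := by
    intro t ht0
    by_contra hcon
    push_neg at hcon
    have htt : t ≤ t + R := by linarith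
    set F : ℝ → ℝ := fun τ => ∑ k : Fin m, a k τ * X (h k τ) t with hFdef
    have hFbd : ∀ τ, |F τ| ≤ K * S τ := by
      intro τ
      have hterm : ∀ k : Fin m, |a k τ * X (h k τ) t| ≤ a k τ * K := by
        intro k
        rw [abs_mul, abs_of_nonneg (hapos k τ)]
        refine mul_le_mul_of_nonneg_left ?_ (hapos k τ)
        rcases lt_or_ge (h k τ) t with hc1 | hc1
        · rw [hX0 t (h k τ) ht0 hc1]; simpa using hK.le
        · calc |X (h k τ) t| ≤ K * Real.exp (-l * (h k τ - t)) :=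
                hexp t (h k τ) ht0 hc1
            _ ≤ K * 1 := by
                refine mul_le_mul_of_nonneg_left ?_ hK.le
                rw [Real.exp_le_one_iff]
                nlinarith
            _ = K := mul_one K
      calc |F τ| ≤ ∑ k : Fin m, |a k τ * X (h k τ) t| := Finset.abs_sum_le_sum_abs _ _
        _ ≤ ∑ k : Fin m, a k τ * K := Finset.sum_le_sum fun k _ => hterm k
        _ = K * S τ := by simp only [hSdef, Finset.mul_sum]; exact Finset.sum_congr rfl fun k _ => mul_comm _ _
    have hSnnInt : 0 ≤ ∫ τ in t..(t + R), S τ :=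
      intervalIntegral.integral_nonneg htt fun τ _ => hSnn τ
    have hIbound : |∫ τ in t..(t + R), F τ| ≤ K * ∫ τ in t..(t + R), S τ := by
      by_cases hFint : IntervalIntegrable F volume t (t + R)
      · calc |∫ τ in t..(t + R), F τ| ≤ ∫ τ in t..(t + R), |F τ| := by
              simpa using intervalIntegral.norm_integral_le_integral_norm (f := F) htt
          _ ≤ ∫ τ in t..(t + R), K * S τ :=
              intervalIntegral.integral_mono_on htt hFint.abs
                ((hIntS t).const_mul K) (fun τ _ => hFbd τ)
          _ = K * ∫ τ in t..(t + R), S τ := intervalIntegral.integral_const_mul _ _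
      · rw [intervalIntegral.integral_undef hFint]
        simpa using mul_nonneg hK.le hSnnInt
    have hXval := hXeq t (t + R) ht0 htt
    have hKc : K * c = 1 / 2 := by rw [hcdef]; field_simp
    have hIlt : |∫ τ in t..(t + R), F τ| < 1 / 2 := by
      refine lt_of_le_of_lt hIbound ?_
      calc K * ∫ τ in t..(t + R), S τ < K * c := by
            exact mul_lt_mul_of_pos_left hcon hK
        _ = 1 / 2 := hKc
    have hXge : 1 / 2 < X (t + R) t := by
      rw [hXval]
      have := abs_lt.1 hIlt
      simp only [hFdef] at this ⊢
      linarith [this.1, this.2]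
    have hXle : |X (t + R) t| ≤ 1 / 2 := by
      have h1 := hexp t (t + R) ht0 htt
      have h2 : t + R - t = R := by ring
      rw [h2] at h1
      exact h1.trans hRexp
    linarith [le_abs_self (X (t + R) t)]
  refine ⟨R, hR0, ?_⟩
  have hev : ∀ᶠ t in atTop, c ≤ ∫ τ in t..(t + R), S τ :=
    eventually_atTop.2 ⟨0, fun t ht => key t ht⟩
  have hub : ∀ t : ℝ, (∫ τ in t..(t + R), S τ) ≤ m * A * R := by
    intro t
    have := intervalIntegral.norm_integral_le_of_norm_le_const
      (C := (m : ℝ) * A) (f := S) (a := t) (b := t + R)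
      (fun τ _ => by simpa using hSbd τ)
    have h2 : |t + R - t| = R := by rw [abs_of_nonneg (by linarith)]; ring
    rw [h2] at this
    calc (∫ τ in t..(t + R), S τ) ≤ |∫ τ in t..(t + R), S τ| := le_abs_self _
      _ ≤ m * A * R := by simpa using this
  have hcob : IsCoboundedUnder (· ≥ ·) atTop (fun t => ∫ τ in t..(t + R), S τ) :=
    IsCoboundedUnder.of_frequently_le
      (Frequently.of_forall fun t => hub t)
  have hli : c ≤ liminf (fun t => ∫ τ in t..(t + R), S τ) atTop :=
    le_liminf_of_le hcob hev
  exact lt_of_lt_of_le hcpos hli
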